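/- arXiv:2102.11448 — 2 statements merged into one kernel-verified Lean document; each statement's English description precedes it below -/
import Mathlib

section
/- Suppose the value function V^π_M of the model M is L-Lipschitz as a function of the initial state, for some L ≥ 0. Then for every initial state s₀, letting (s_t) denote the trajectory of the model M' under π started at s₀, the value functions of the two models satisfy |V^π_{M'}(s₀) − V^π_M(s₀)| ≤ κ · L · E_{(s,a)∼ρ^π_{M'}}[dist(M'(s,a), M(s,a))]; equivalently, |V^π_{M'}(s₀) − V^π_M(s₀)| ≤ L · Σ_{t=0}^∞ γ^{t+1} · dist(M'(s_t, π(s_t)), M(s_t, π(s_t))), where the right-hand side is a value in [0,∞]. -/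
open scoped ENNReal

/-- Trajectory of a deterministic model `M` under policy `π` from initial state `s₀`. -/
noncomputable def traj {S A : Type*} (M : S × A → S) (π : S → A) (s₀ : S) : ℕ → S
  | 0 => s₀
  | n + 1 => M (traj M π s₀ n, π (traj M π s₀ n))

/-- Value function `V^π_M(s₀) = Σ_t γ^t r(s_t, π(s_t))` along the trajectory of `M`. -/
noncomputable def value {S A : Type*} (M : S × A → S) (π : S → A)
    (r : S × A → ℝ) (γ : ℝ) (s₀ : S) : ℝ :=
  ∑' t : ℕ, γ ^ t * r (traj M π s₀ t, π (traj M π s₀ t))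

lemma traj_shift {S A : Type*} (M : S × A → S) (π : S → A) (s₀ : S) (n : ℕ) :
    traj M π s₀ (n + 1) = traj M π (M (s₀, π s₀)) n := by
  induction n with
  | zero => rfl
  | succ n ih =>
    rw [show traj M π s₀ (n + 1 + 1)
        = M (traj M π s₀ (n + 1), π (traj M π s₀ (n + 1))) from rfl, ih]
    rfl

lemma summable_val {S A : Type*} (M : S × A → S) (π : S → A)
    (r : S × A → ℝ) (R γ : ℝ) (hγ0 : 0 < γ) (hγ1 : γ < 1)
    (hR : ∀ p : S × A, |r p| ≤ R) (s : S) :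
    Summable (fun t : ℕ => γ ^ t * r (traj M π s t, π (traj M π s t))) := by
  apply Summable.of_abs
  have h1 : ∀ t : ℕ, |γ ^ t * r (traj M π s t, π (traj M π s t))| ≤ R * γ ^ t := by
    intro t
    rw [abs_mul, abs_pow, abs_of_pos hγ0, mul_comm]
    exact mul_le_mul_of_nonneg_right (hR _) (by positivity)
  exact Summable.of_nonneg_of_le (fun t => abs_nonneg _) h1
    ((summable_geometric_of_lt_one hγ0.le hγ1).mul_left R)

lemma value_bound {S A : Type*} (M : S × A → S) (π : S → A)
    (r : S × A → ℝ) (R γ : ℝ) (hγ0 : 0 < γ) (hγ1 : γ < 1)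
    (hR : ∀ p : S × A, |r p| ≤ R) (s : S) :
    |value M π r γ s| ≤ R * (1 - γ)⁻¹ := by
  have hsum := summable_val M π r R γ hγ0 hγ1 hR s
  have habs : Summable (fun t : ℕ => |γ ^ t * r (traj M π s t, π (traj M π s t))|) :=
    hsum.abs
  have hgeo : Summable (fun t : ℕ => R * γ ^ t) :=
    (summable_geometric_of_lt_one hγ0.le hγ1).mul_left R
  have hb : ∀ t : ℕ, |γ ^ t * r (traj M π s t, π (traj M π s t))| ≤ R * γ ^ t := by
    intro t
    rw [abs_mul, abs_pow, abs_of_pos hγ0, mul_comm]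
    exact mul_le_mul_of_nonneg_right (hR _) (by positivity)
  have h1 : |value M π r γ s|
      ≤ ∑' t : ℕ, |γ ^ t * r (traj M π s t, π (traj M π s t))| := by
    have := norm_tsum_le_tsum_norm (f := fun t : ℕ =>
      γ ^ t * r (traj M π s t, π (traj M π s t))) (by simpa only [Real.norm_eq_abs] using habs)
    simpa only [value, Real.norm_eq_abs] using this
  have h2 : (∑' t : ℕ, |γ ^ t * r (traj M π s t, π (traj M π s t))|)
      ≤ ∑' t : ℕ, R * γ ^ t := Summable.tsum_le_tsum hb habs hgeo
  have h3 : (∑' t : ℕ, R * γ ^ t) = R * (1 - γ)⁻¹ := by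
    rw [tsum_mul_left, tsum_geometric_of_lt_one hγ0.le hγ1]
  linarith

lemma bellman {S A : Type*} (M : S × A → S) (π : S → A)
    (r : S × A → ℝ) (R γ : ℝ) (hγ0 : 0 < γ) (hγ1 : γ < 1)
    (hR : ∀ p : S × A, |r p| ≤ R) (s : S) :
    value M π r γ s = r (s, π s) + γ * value M π r γ (M (s, π s)) := by
  have hsum := summable_val M π r R γ hγ0 hγ1 hR s
  have hshift : ∀ n : ℕ, γ ^ (n + 1) * r (traj M π s (n + 1), π (traj M π s (n + 1)))
      = γ * (γ ^ n * r (traj M π (M (s, π s)) n, π (traj M π (M (s, π s)) n))) := by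
    intro n; rw [traj_shift]; ring
  rw [value, Summable.tsum_eq_zero_add hsum]
  congr 1
  · show γ ^ 0 * r (s, π s) = r (s, π s); rw [pow_zero, one_mul]
  · rw [value, ← tsum_mul_left]
    exact tsum_congr hshift

/-- If `V^π_M` is `L`-Lipschitz in the initial state, then the value difference between
models `M'` and `M` is bounded by `κ·L` times the discounted visitation expectation
(along `M'`'s trajectory) of the model discrepancy; equivalently by
`L · Σ_t γ^(t+1) · dist(M'(s_t,π s_t), M(s_t,π s_t))`, in `[0,∞]`. -/
theorem value_diff_le_visitation_discrepancy
    {S A : Type*} [MetricSpace S]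
    (M M' : S × A → S) (π : S → A) (r : S × A → ℝ) (R γ L : ℝ)
    (hγ0 : 0 < γ) (hγ1 : γ < 1)
    (hR : ∀ p : S × A, |r p| ≤ R)
    (hL : 0 ≤ L)
    (hLip : ∀ s s' : S, |value M π r γ s - value M π r γ s'| ≤ L * dist s s')
    (s₀ : S) :
    (ENNReal.ofReal |value M' π r γ s₀ - value M π r γ s₀| ≤
      ENNReal.ofReal (γ / (1 - γ) * L) *
        (ENNReal.ofReal (1 - γ) *
          ∑' t : ℕ, ENNReal.ofReal (γ ^ t) *
            ENNReal.ofReal (dist (M' (traj M' π s₀ t, π (traj M' π s₀ t)))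
              (M (traj M' π s₀ t, π (traj M' π s₀ t)))))) ∧
    (ENNReal.ofReal |value M' π r γ s₀ - value M π r γ s₀| ≤
      ENNReal.ofReal L *
        ∑' t : ℕ, ENNReal.ofReal (γ ^ (t + 1)) *
          ENNReal.ofReal (dist (M' (traj M' π s₀ t, π (traj M' π s₀ t)))
            (M (traj M' π s₀ t, π (traj M' π s₀ t))))) := by
  have hγ' : (0:ℝ) < 1 - γ := by linarith
  set s' : ℕ → S := traj M' π s₀ with hs'
  set d : ℕ → ℝ := fun t => dist (M' (s' t, π (s' t))) (M (s' t, π (s' t))) with hd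
  have hd0 : ∀ t, 0 ≤ d t := fun t => dist_nonneg
  set u : ℕ → ℝ := fun N =>
    (∑ k ∈ Finset.range N, γ ^ k * r (s' k, π (s' k))) + γ ^ N * value M π r γ (s' N)
    with hu
  -- one-step bound
  have hstep : ∀ N : ℕ, |u (N + 1) - u N| ≤ γ ^ (N + 1) * (L * d N) := by
    intro N
    have hB := bellman M π r R γ hγ0 hγ1 hR (s' N)
    have e1 : u (N + 1) - u N
        = γ ^ (N + 1) * (value M π r γ (s' (N + 1)) - value M π r γ (M (s' N, π (s' N)))) := by
      simp only [hu, Finset.sum_range_succ]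
      rw [hB]; ring
    rw [e1, abs_mul, abs_pow, abs_of_pos hγ0]
    refine mul_le_mul_of_nonneg_left ?_ (by positivity)
    have hsucc : s' (N + 1) = M' (s' N, π (s' N)) := rfl
    rw [hsucc]
    exact hLip _ _
  -- telescoping
  have htel : ∀ N : ℕ, |u N - u 0| ≤ ∑ k ∈ Finset.range N, γ ^ (k + 1) * (L * d k) := by
    intro N
    induction N with
    | zero => simp
    | succ N ih =>
      rw [Finset.sum_range_succ]
      have h3 := abs_sub_le (u (N + 1)) (u N) (u 0)
      have h4 := hstep N
      linarith
  -- limit of u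
  have h0 : u 0 = value M π r γ s₀ := by simp only [hu, Finset.range_zero, Finset.sum_empty, pow_zero, one_mul, zero_add]; rfl
  have hlim : Filter.Tendsto u Filter.atTop (nhds (value M' π r γ s₀)) := by
    have hsum' := summable_val M' π r R γ hγ0 hγ1 hR s₀
    have h1 : Filter.Tendsto (fun N => ∑ k ∈ Finset.range N, γ ^ k * r (s' k, π (s' k)))
        Filter.atTop (nhds (value M' π r γ s₀)) := by
      simpa [value, hs'] using hsum'.hasSum.tendsto_sum_nat
    have h2 : Filter.Tendsto (fun N => γ ^ N * value M π r γ (s' N))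
        Filter.atTop (nhds 0) := by
      apply squeeze_zero_norm (a := fun N => (R * (1 - γ)⁻¹) * γ ^ N)
      · intro n
        rw [Real.norm_eq_abs, abs_mul, abs_pow, abs_of_pos hγ0, mul_comm]
        exact mul_le_mul_of_nonneg_right
          (value_bound M π r R γ hγ0 hγ1 hR (s' n)) (by positivity)
      · simpa using
          (tendsto_pow_atTop_nhds_zero_of_lt_one hγ0.le hγ1).const_mul (R * (1 - γ)⁻¹)
    simpa using h1.add h2
  -- the master bound in ℝ≥0∞
  set T2 : ℝ≥0∞ := ∑' t : ℕ, ENNReal.ofReal (γ ^ (t + 1) * (L * d t)) with hT2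
  have hN : ∀ N : ℕ, ENNReal.ofReal |u N - u 0| ≤ T2 := by
    intro N
    calc ENNReal.ofReal |u N - u 0|
        ≤ ENNReal.ofReal (∑ k ∈ Finset.range N, γ ^ (k + 1) * (L * d k)) :=
          ENNReal.ofReal_le_ofReal (htel N)
      _ = ∑ k ∈ Finset.range N, ENNReal.ofReal (γ ^ (k + 1) * (L * d k)) :=
          ENNReal.ofReal_sum_of_nonneg (fun k _ => by positivity)
      _ ≤ T2 := ENNReal.sum_le_tsum _
  have hconv : Filter.Tendsto (fun N => ENNReal.ofReal |u N - u 0|) Filter.atTop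
      (nhds (ENNReal.ofReal |value M' π r γ s₀ - value M π r γ s₀|)) := by
    rw [← h0]
    exact ENNReal.tendsto_ofReal ((hlim.sub_const (u 0)).abs)
  have main : ENNReal.ofReal |value M' π r γ s₀ - value M π r γ s₀| ≤ T2 :=
    le_of_tendsto hconv (Filter.Eventually.of_forall hN)
  constructor
  · refine main.trans_eq ?_
    rw [← ENNReal.tsum_mul_left, ← ENNReal.tsum_mul_left]
    refine tsum_congr fun t => ?_
    rw [← ENNReal.ofReal_mul (by positivity), ← ENNReal.ofReal_mul (by positivity),
        ← ENNReal.ofReal_mul (by positivity)]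
    congr 1
    field_simp
    ring
  · refine main.trans_eq ?_
    rw [← ENNReal.tsum_mul_left]
    refine tsum_congr fun t => ?_
    rw [← ENNReal.ofReal_mul (by positivity), ← ENNReal.ofReal_mul hL]
    congr 1
    ring
end

section
/- Suppose V_g is L-Lipschitz for some L ≥ 0. Then for every state s ∈ S, the value functions of the two dynamics maps satisfy |V_f(s) − V_g(s)| ≤ L · Σ_{j=0}^∞ γ^{j+1} · dist(f(f^j(s)), g(f^j(s))), where the right-hand side is a value in [0,∞]; in particular, if dist(f(x), g(x)) ≤ ε for all x ∈ S, then |V_f(s) − V_g(s)| ≤ γ·L·ε/(1−γ). -/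
/-- Value function of a dynamics map `f`: `V_f(s) = Σ_t γ^t r(f^t(s))`. -/
noncomputable def val {S : Type*} (f : S → S) (r : S → ℝ) (γ : ℝ) (s : S) : ℝ :=
  ∑' t : ℕ, γ ^ t * r (f^[t] s)

/-- Hybrid return: follow `f` for the first `j` steps, then `g` thereafter:
`W_j(s) = Σ_{t<j} γ^t r(f^t(s)) + γ^j V_g(f^j(s))`. -/
noncomputable def hyb {S : Type*} (f g : S → S) (r : S → ℝ) (γ : ℝ) (j : ℕ) (s : S) : ℝ :=
  (∑ t ∈ Finset.range j, γ ^ t * r (f^[t] s)) + γ ^ j * val g r γ (f^[j] s)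

open scoped ENNReal


section Aux

variable {S : Type*} (f g : S → S) (r : S → ℝ) (R γ : ℝ)

lemma summable_ret (hγ0 : 0 < γ) (hγ1 : γ < 1) (hR : ∀ s : S, |r s| ≤ R) (s : S) :
    Summable (fun t : ℕ => γ ^ t * r (f^[t] s)) := by
  apply Summable.of_norm_bounded (g := fun t => R * γ ^ t)
    ((summable_geometric_of_lt_one hγ0.le hγ1).mul_left R)
  intro t
  rw [Real.norm_eq_abs, abs_mul, abs_pow, abs_of_pos hγ0, mul_comm]
  exact mul_le_mul_of_nonneg_right (hR _) (pow_nonneg hγ0.le t)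

lemma val_rec (hγ0 : 0 < γ) (hγ1 : γ < 1) (hR : ∀ s : S, |r s| ≤ R) (x : S) :
    val g r γ x = r x + γ * val g r γ (g x) := by
  have hs := summable_ret g r R γ hγ0 hγ1 hR x
  rw [val, Summable.tsum_eq_zero_add hs]
  simp only [pow_zero, one_mul, Function.iterate_zero_apply]
  congr 1
  rw [val, ← tsum_mul_left]
  congr 1 with n
  rw [Function.iterate_succ_apply, pow_succ']
  ring

lemma abs_val_le (hγ0 : 0 < γ) (hγ1 : γ < 1) (hR : ∀ s : S, |r s| ≤ R) (x : S) :
    |val g r γ x| ≤ R / (1 - γ) := by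
  have hs := summable_ret g r R γ hγ0 hγ1 hR x
  have habs : Summable (fun t : ℕ => ‖γ ^ t * r (g^[t] x)‖) := by
    exact hs.abs
  calc |val g r γ x| ≤ ∑' t : ℕ, |γ ^ t * r (g^[t] x)| := by
        rw [val]
        exact norm_tsum_le_tsum_norm habs
    _ ≤ ∑' t : ℕ, R * γ ^ t := by
        apply Summable.tsum_le_tsum _ hs.abs ((summable_geometric_of_lt_one hγ0.le hγ1).mul_left R)
        intro t
        rw [abs_mul, abs_pow, abs_of_pos hγ0, mul_comm]
        exact mul_le_mul_of_nonneg_right (hR _) (pow_nonneg hγ0.le t)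
    _ = R / (1 - γ) := by
        rw [tsum_mul_left, tsum_geometric_of_lt_one hγ0.le hγ1, div_eq_mul_inv]

lemma hyb_tendsto (hγ0 : 0 < γ) (hγ1 : γ < 1) (hR : ∀ s : S, |r s| ≤ R) (s : S) :
    Filter.Tendsto (fun j => hyb f g r γ j s) Filter.atTop (nhds (val f r γ s)) := by
  have hs := summable_ret f r R γ hγ0 hγ1 hR s
  have h1 : Filter.Tendsto (fun j => ∑ t ∈ Finset.range j, γ ^ t * r (f^[t] s))
      Filter.atTop (nhds (val f r γ s)) := hs.hasSum.tendsto_sum_nat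
  have h2 : Filter.Tendsto (fun j : ℕ => γ ^ j * val g r γ (f^[j] s))
      Filter.atTop (nhds 0) := by
    apply squeeze_zero_norm (a := fun j : ℕ => γ ^ j * (R / (1 - γ)))
    · intro j
      rw [Real.norm_eq_abs, abs_mul, abs_pow, abs_of_pos hγ0]
      exact mul_le_mul_of_nonneg_left (abs_val_le g r R γ hγ0 hγ1 hR _)
        (pow_nonneg hγ0.le j)
    · simpa using (tendsto_pow_atTop_nhds_zero_of_lt_one hγ0.le hγ1).mul_const (R / (1 - γ))
  simpa [hyb] using h1.add h2

lemma telescope_bound (a : ℕ → ℝ) (l : ℝ) (d : ℕ → ℝ)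
    (ha : Filter.Tendsto a Filter.atTop (nhds l))
    (hd : ∀ j, |a (j + 1) - a j| ≤ d j) (hsum : Summable d) :
    |l - a 0| ≤ ∑' j, d j := by
  have hdn : ∀ j, 0 ≤ d j := fun j => le_trans (abs_nonneg _) (hd j)
  have key : ∀ n, |a n - a 0| ≤ ∑' j, d j := by
    intro n
    calc |a n - a 0| ≤ ∑ j ∈ Finset.range n, d j := by
          induction n with
          | zero => simp
          | succ n ih =>
            calc |a (n + 1) - a 0| ≤ |a (n + 1) - a n| + |a n - a 0| := abs_sub_le _ _ _
              _ ≤ d n + ∑ j ∈ Finset.range n, d j := add_le_add (hd n) ih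
              _ = ∑ j ∈ Finset.range (n + 1), d j := by
                  rw [Finset.sum_range_succ]; ring
      _ ≤ ∑' j, d j := Summable.sum_le_tsum _ (fun j _ => hdn j) hsum
  have : Filter.Tendsto (fun n => |a n - a 0|) Filter.atTop (nhds |l - a 0|) :=
    ((ha.sub tendsto_const_nhds).abs)
  exact le_of_tendsto this (Filter.Eventually.of_forall key)

end Aux

section Main

variable {S : Type*} [MetricSpace S] (f g : S → S) (r : S → ℝ) (R γ L : ℝ)

lemma hyb_diff_bound (hγ0 : 0 < γ) (hγ1 : γ < 1) (hR : ∀ s : S, |r s| ≤ R)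
    (hLip : ∀ s s' : S, |val g r γ s - val g r γ s'| ≤ L * dist s s') (s : S) (j : ℕ) :
    |hyb f g r γ (j + 1) s - hyb f g r γ j s| ≤
      L * (γ ^ (j + 1) * dist (f (f^[j] s)) (g (f^[j] s))) := by
  have hrec := val_rec g r R γ hγ0 hγ1 hR (f^[j] s)
  have hdiff : hyb f g r γ (j + 1) s - hyb f g r γ j s =
      γ ^ (j + 1) * (val g r γ (f^[j + 1] s) - val g r γ (g (f^[j] s))) := by
    simp only [hyb, Finset.sum_range_succ, hrec]
    ring
  rw [hdiff, abs_mul, abs_pow, abs_of_pos hγ0]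
  calc γ ^ (j + 1) * |val g r γ (f^[j + 1] s) - val g r γ (g (f^[j] s))|
      ≤ γ ^ (j + 1) * (L * dist (f^[j + 1] s) (g (f^[j] s))) :=
        mul_le_mul_of_nonneg_left (hLip _ _) (pow_nonneg hγ0.le _)
    _ = L * (γ ^ (j + 1) * dist (f (f^[j] s)) (g (f^[j] s))) := by
        rw [Function.iterate_succ_apply']; ring

lemma real_main (hγ0 : 0 < γ) (hγ1 : γ < 1) (hR : ∀ s : S, |r s| ≤ R)
    (hLip : ∀ s s' : S, |val g r γ s - val g r γ s'| ≤ L * dist s s') (s : S)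
    (hsum : Summable (fun j : ℕ => L * (γ ^ (j + 1) * dist (f (f^[j] s)) (g (f^[j] s))))) :
    |val f r γ s - val g r γ s| ≤
      ∑' j : ℕ, L * (γ ^ (j + 1) * dist (f (f^[j] s)) (g (f^[j] s))) := by
  have h0 : hyb f g r γ 0 s = val g r γ s := by simp [hyb]
  have := telescope_bound (fun j => hyb f g r γ j s) (val f r γ s)
    (fun j => L * (γ ^ (j + 1) * dist (f (f^[j] s)) (g (f^[j] s))))
    (hyb_tendsto f g r R γ hγ0 hγ1 hR s)
    (fun j => hyb_diff_bound f g r R γ L hγ0 hγ1 hR hLip s j) hsum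
  simpa [h0] using this

end Main


/-- If `V_g` is `L`-Lipschitz, then
`|V_f(s) − V_g(s)| ≤ L · Σ_j γ^{j+1} · dist(f(f^j(s)), g(f^j(s)))` (a value in `[0,∞]`);
in particular, if `dist(f(x), g(x)) ≤ ε` for all `x`, then
`|V_f(s) − V_g(s)| ≤ γ·L·ε/(1−γ)`. -/
theorem abs_val_sub_val_le
    {S : Type*} [MetricSpace S]
    (f g : S → S) (r : S → ℝ) (R γ L ε : ℝ)
    (hγ0 : 0 < γ) (hγ1 : γ < 1)
    (hR : ∀ s : S, |r s| ≤ R)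
    (hL : 0 ≤ L)
    (hLip : ∀ s s' : S, |val g r γ s - val g r γ s'| ≤ L * dist s s')
    (s : S) :
    (ENNReal.ofReal |val f r γ s - val g r γ s| ≤
      ENNReal.ofReal L *
        ∑' j : ℕ, ENNReal.ofReal (γ ^ (j + 1) * dist (f (f^[j] s)) (g (f^[j] s)))) ∧
    ((∀ x : S, dist (f x) (g x) ≤ ε) →
      |val f r γ s - val g r γ s| ≤ γ * L * ε / (1 - γ)) := by
  set D : ℕ → ℝ := fun j => γ ^ (j + 1) * dist (f (f^[j] s)) (g (f^[j] s)) with hD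
  have hDn : ∀ j, 0 ≤ D j := fun j => mul_nonneg (pow_nonneg hγ0.le _) dist_nonneg
  constructor
  · by_cases hsum : Summable D
    · have h := real_main f g r R γ L hγ0 hγ1 hR hLip s (hsum.mul_left L)
      rw [tsum_mul_left] at h
      calc ENNReal.ofReal |val f r γ s - val g r γ s|
          ≤ ENNReal.ofReal (L * ∑' j, D j) := ENNReal.ofReal_le_ofReal h
        _ = ENNReal.ofReal L * ENNReal.ofReal (∑' j, D j) := ENNReal.ofReal_mul hL
        _ = ENNReal.ofReal L * ∑' j, ENNReal.ofReal (D j) := by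
            rw [ENNReal.ofReal_tsum_of_nonneg hDn hsum]
    · rcases eq_or_lt_of_le hL with hL0 | hLpos
      · have hsum0 : Summable (fun j : ℕ => L * D j) := by
          simp only [← hL0, zero_mul]
          exact summable_zero
        have h := real_main f g r R γ L hγ0 hγ1 hR hLip s hsum0
        have hz : ∑' j : ℕ, L * D j = 0 := by
          simp [← hL0]
        rw [hz] at h
        have : |val f r γ s - val g r γ s| = 0 := le_antisymm h (abs_nonneg _)
        rw [this]
        simp
      · have htop : ∑' j : ℕ, ENNReal.ofReal (D j) = ⊤ := by
          by_contra hne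
          exact hsum ((ENNReal.summable_toReal hne).congr
            (fun j => ENNReal.toReal_ofReal (hDn j)))
        rw [htop, ENNReal.mul_top ((ENNReal.ofReal_pos.mpr hLpos).ne')]
        exact le_top
  · intro hε
    have hε0 : 0 ≤ ε := le_trans dist_nonneg (hε s)
    have hgsum : Summable (fun j : ℕ => γ ^ (j + 1) * ε) :=
      ((summable_geometric_of_lt_one hγ0.le hγ1).mul_left (γ * ε)).congr
        (fun j => by ring)
    have hDle : ∀ j, D j ≤ γ ^ (j + 1) * ε := fun j =>
      mul_le_mul_of_nonneg_left (hε _) (pow_nonneg hγ0.le _)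
    have hDs : Summable D := Summable.of_nonneg_of_le hDn hDle hgsum
    have h := real_main f g r R γ L hγ0 hγ1 hR hLip s (hDs.mul_left L)
    rw [tsum_mul_left] at h
    have hts : ∑' j, D j ≤ ∑' j : ℕ, γ ^ (j + 1) * ε := Summable.tsum_le_tsum hDle hDs hgsum
    have hval : ∑' j : ℕ, γ ^ (j + 1) * ε = γ * ε / (1 - γ) := by
      calc ∑' j : ℕ, γ ^ (j + 1) * ε = ∑' j : ℕ, (γ * ε) * γ ^ j :=
            tsum_congr (fun j => by ring)
        _ = (γ * ε) * (1 - γ)⁻¹ := by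
            rw [tsum_mul_left, tsum_geometric_of_lt_one hγ0.le hγ1]
        _ = γ * ε / (1 - γ) := by rw [div_eq_mul_inv]
    calc |val f r γ s - val g r γ s| ≤ L * ∑' j, D j := h
      _ ≤ L * (γ * ε / (1 - γ)) := by
          exact mul_le_mul_of_nonneg_left (hts.trans_eq hval) hL
      _ = γ * L * ε / (1 - γ) := by ring
end
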